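/- Let n_1,…,n_b be positive integers and k ≥ 2 an integer. If the path forest with path orders n_1,…,n_b can be burned in at most k−1 rounds, then there exist pairwise disjoint subsets S_1,…,S_b of {1,…,k−1} such that for every i, the sum over j ∈ S_i of 2j is at least n_i + 1 (equivalently, the sum over j ∈ S_i of j is at least ⌈(n_i+1)/2⌉). -/

import Mathlib

/-- The path forest with `b` components, the `i`-th being a path on `n i` vertices. -/
def pathForest (b : ℕ) (n : Fin b → ℕ) : SimpleGraph (Σ i : Fin b, Fin (n i)) where
  Adj u v := u.1 = v.1 ∧ (u.2.val + 1 = v.2.val ∨ v.2.val + 1 = u.2.val)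
  symm := by
    constructor
    rintro u v ⟨h1, h2⟩
    exact ⟨h1.symm, h2.symm⟩
  loopless := by
    constructor
    rintro u ⟨-, h⟩
    omega

/-- A burning schedule of length `m ≤ k` burns `G`: for every vertex `v` there is a
round `i` (`0`-indexed, corresponding to round `i+1`) whose activator `x i` reaches `v`
within distance `m - (i+1)`. -/
def BurnsIn {V : Type*} (G : SimpleGraph V) (k : ℕ) : Prop :=
  ∃ m, m ≤ k ∧ ∃ x : Fin m → V, ∀ v : V, ∃ i : Fin m,
    G.Reachable (x i) v ∧ G.dist (x i) v ≤ m - (i.val + 1)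

private lemma pf_walk_bound {b : ℕ} {n : Fin b → ℕ} {u v : Σ i : Fin b, Fin (n i)}
    (w : (pathForest b n).Walk u v) :
    u.1 = v.1 ∧ u.2.val ≤ v.2.val + w.length ∧ v.2.val ≤ u.2.val + w.length := by
  induction w with
  | nil => simp
  | @cons a b c h w ih =>
      obtain ⟨h1, h2⟩ := h
      obtain ⟨e1, e2, e3⟩ := ih
      refine ⟨h1.trans e1, ?_, ?_⟩ <;> show _ ≤ _ + (w.length + 1) <;> omega

theorem stmt_14 (b : ℕ) (n : Fin b → ℕ) (hn : ∀ i, 1 ≤ n i) (k : ℕ) (hk : 2 ≤ k)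
    (hburn : BurnsIn (pathForest b n) (k - 1)) :
    ∃ S : Fin b → Finset ℕ,
      (∀ i, ∀ j ∈ S i, 1 ≤ j ∧ j ≤ k - 1) ∧
      (∀ i i' : Fin b, i ≠ i' → Disjoint (S i) (S i')) ∧
      ∀ i, n i + 1 ≤ ∑ j ∈ S i, 2 * j := by
  obtain ⟨m, hm, x, hx⟩ := hburn
  set T : Fin b → Finset (Fin m) := fun c => Finset.univ.filter (fun i => (x i).1 = c) with hT
  refine ⟨fun c => (T c).image (fun i => m - i.val), ?_, ?_, ?_⟩
  · intro c j hj
    simp only [Finset.mem_image] at hj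
    obtain ⟨i, hi, rfl⟩ := hj
    have := i.isLt
    omega
  · intro c c' hcc'
    rw [Finset.disjoint_left]
    intro j hj hj'
    simp only [hT, Finset.mem_image, Finset.mem_filter] at hj hj'
    obtain ⟨i, ⟨-, hi⟩, rfl⟩ := hj
    obtain ⟨i', ⟨-, hi'⟩, hii'⟩ := hj'
    have hie : i = i' := by
      have := i.isLt; have := i'.isLt
      exact Fin.ext (by omega)
    exact hcc' (hi ▸ hie ▸ hi')
  · intro c
    have hcov : ∀ t : Fin (n c), ∃ i : Fin m, (x i).1 = c ∧
        (x i).2.val ≤ t.val + (m - (i.val + 1)) ∧ t.val ≤ (x i).2.val + (m - (i.val + 1)) := by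
      intro t
      obtain ⟨i, hr, hd⟩ := hx ⟨c, t⟩
      obtain ⟨p, hp⟩ := hr.exists_walk_length_eq_dist
      obtain ⟨e1, e2, e3⟩ := pf_walk_bound p
      have ht : ((⟨c, t⟩ : Σ i : Fin b, Fin (n i)).snd).val = t.val := rfl
      exact ⟨i, e1, by omega, by omega⟩
    choose f hf1 hf2 hf3 using hcov
    -- T c is nonempty
    have hne : (T c).Nonempty := by
      refine ⟨f ⟨0, hn c⟩, ?_⟩
      simp only [hT, Finset.mem_filter, Finset.mem_univ, true_and]
      exact hf1 _
    -- counting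
    have hcount : n c ≤ ∑ i ∈ T c, (2 * (m - i.val) - 1) := by
      have key : (Finset.univ : Finset (Fin (n c))).card ≤
          ((T c).sigma (fun i => Finset.range (2 * (m - i.val) - 1))).card := by
        apply Finset.card_le_card_of_injOn
          (fun t => ⟨f t, t.val + (m - (f t).val - 1) - (x (f t)).2.val⟩)
        · rintro t -
          simp only [Finset.mem_coe, Finset.mem_sigma, Finset.mem_range, hT, Finset.mem_filter,
            Finset.mem_univ, true_and]
          have h1 := hf1 t; have h2 := hf2 t; have h3 := hf3 t
          have := (f t).isLt
          exact ⟨h1, by omega⟩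
        · rintro t - t' - h
          have hfst : f t = f t' := congrArg Sigma.fst h
          have hsnd : t.val + (m - (f t).val - 1) - (x (f t)).2.val
              = t'.val + (m - (f t').val - 1) - (x (f t')).2.val := by
            rw [Sigma.mk.inj_iff] at h
            rw [hfst]
            exact eq_of_heq (hfst ▸ h.2)
          have h2 := hf2 t; have h3 := hf3 t
          have h2' := hf2 t'; have h3' := hf3 t'
          rw [hfst] at h2 h3 hsnd
          exact Fin.ext (by omega)
      rw [Finset.card_univ, Fintype.card_fin, Finset.card_sigma] at key
      simpa using key
    have hsum : ∑ j ∈ (T c).image (fun i => m - i.val), 2 * j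
        = ∑ i ∈ T c, 2 * (m - i.val) := by
      rw [Finset.sum_image]
      rintro i - i' - h
      simp only at h
      have := i.isLt; have := i'.isLt
      exact Fin.ext (by omega)
    rw [hsum]
    have hstep : ∑ i ∈ T c, (2 * (m - i.val) - 1) + (T c).card = ∑ i ∈ T c, 2 * (m - i.val) := by
      have hc1 : (T c).card = ∑ _i ∈ T c, 1 := by simp
      rw [hc1, ← Finset.sum_add_distrib]
      apply Finset.sum_congr rfl
      rintro i -
      have := i.isLt
      omega
    have hcard : 1 ≤ (T c).card := Finset.card_pos.mpr hne
    omega
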